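/- For three pairwise jointly distributed ±1-valued random variable pairs (A₁,B₁), (A₂,B₂), (A₃,B₃) (a consistently connected cyclic system of rank 3 with identical connection marginals), a joint distribution (X₁,X₂,X₃) on {−1,1}³ reproducing all three pairwise distributions (with X₁X₂ distributed as A₁B₁, X₂X₃ as A₂B₂, X₃X₁ as A₃B₃) exists if and only if s_odd(⟨A₁B₁⟩, ⟨A₂B₂⟩, ⟨A₃B₃⟩) ≤ 1, where s_odd(x₁,x₂,x₃) = max over sign assignments ι ∈ {−1,1}³ with ι₁ι₂ι₃ = −1 of ι₁x₁+ι₂x₂+ι₃x₃. -/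

import Mathlib

def e3 : (Fin 3 → Bool) ≃ Bool × Bool × Bool :=
  ⟨fun x => (x 0, x 1, x 2), fun z => ![z.1, z.2.1, z.2.2],
   by intro x; funext i; fin_cases i <;> rfl, by intro z; rfl⟩

lemma sum_pi3 (f : (Fin 3 → Bool) → ℝ) : ∑ x, f x =
    f ![true,true,true] + f ![true,true,false] + f ![true,false,true] + f ![true,false,false] +
    f ![false,true,true] + f ![false,true,false] + f ![false,false,true] + f ![false,false,false] := by
  rw [← Equiv.sum_comp e3.symm f]
  simp only [Fintype.sum_prod_type, Fintype.sum_bool]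
  show f ![true,true,true] + f ![true,true,false] + (f ![true,false,true] + f ![true,false,false]) +
    (f ![false,true,true] + f ![false,true,false] + (f ![false,false,true] + f ![false,false,false])) = _
  ring

lemma pairsum (f : Bool × Bool → ℝ) : ∑ z, f z =
    f (true,true) + f (true,false) + f (false,true) + f (false,false) := by
  simp only [Fintype.sum_prod_type, Fintype.sum_bool]; ring



theorem stmt12 (μ : Fin 3 → Bool × Bool → ℝ)
    (hpos : ∀ i z, 0 ≤ μ i z) (hsum : ∀ i, ∑ z, μ i z = 1)
    (hcons : ∀ i (v : Bool), ∑ u, μ i (u, v) = ∑ w, μ (i + 1) (v, w)) :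
    (∃ ν : (Fin 3 → Bool) → ℝ, (∀ x, 0 ≤ ν x) ∧ (∑ x, ν x = 1) ∧
      (∀ i (a b : Bool),
        ∑ x ∈ Finset.univ.filter (fun x : Fin 3 → Bool => x i = a ∧ x (i + 1) = b), ν x
          = μ i (a, b))) ↔
    (∀ ε : Fin 3 → ℝ, (∀ i, ε i = 1 ∨ ε i = -1) → (∏ i, ε i) = -1 →
      ∑ i, ε i * (∑ z : Bool × Bool,
        (if z.1 then (1 : ℝ) else -1) * (if z.2 then (1 : ℝ) else -1) * μ i z) ≤ 1) := by
  constructor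
  · -- forward
    rintro ⟨ν, hnn, hsum1, hmarg⟩ ε hε hprod
    have f01 : (0:Fin 3)+1 = 1 := by decide
    have f12 : (1:Fin 3)+1 = 2 := by decide
    have f20 : (2:Fin 3)+1 = 0 := by decide
    have hfilt : ∀ (i : Fin 3) (a b : Bool),
        μ i (a, b) = ∑ x : Fin 3 → Bool, (if x i = a ∧ x (i+1) = b then ν x else 0) := by
      intro i a b
      rw [← hmarg i a b, Finset.sum_filter]
    rw [Fin.prod_univ_three] at hprod
    rw [Fin.sum_univ_three, pairsum, pairsum, pairsum]
    rw [hfilt 0 true true, hfilt 0 true false, hfilt 0 false true, hfilt 0 false false,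
        hfilt 1 true true, hfilt 1 true false, hfilt 1 false true, hfilt 1 false false,
        hfilt 2 true true, hfilt 2 true false, hfilt 2 false true, hfilt 2 false false]
    rw [sum_pi3] at hsum1
    simp only [sum_pi3, f01, f12, f20, Matrix.cons_val_zero, Matrix.cons_val_one,
      Matrix.head_cons, Matrix.cons_val_two, Matrix.tail_cons]
    norm_num
    rcases hε 0 with h0|h0 <;> rcases hε 1 with h1|h1 <;> rcases hε 2 with h2|h2 <;>
      rw [h0, h1, h2] at hprod ⊢ <;> norm_num at hprod <;> norm_num <;>
      linarith [hnn ![true,true,true], hnn ![true,true,false], hnn ![true,false,true],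
        hnn ![true,false,false], hnn ![false,true,true], hnn ![false,true,false],
        hnn ![false,false,true], hnn ![false,false,false]]
  · -- backward
    intro h
    have f01 : (0:Fin 3)+1 = 1 := by decide
    have f12 : (1:Fin 3)+1 = 2 := by decide
    have f20 : (2:Fin 3)+1 = 0 := by decide
    have hsum' : ∀ i : Fin 3,
        μ i (true,true) + μ i (true,false) + μ i (false,true) + μ i (false,false) = 1 := by
      intro i; rw [← pairsum]; exact hsum i
    have hcons' : ∀ (i : Fin 3) (v : Bool),
        μ i (true,v) + μ i (false,v) = μ (i+1) (v,true) + μ (i+1) (v,false) := by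
      intro i v
      have := hcons i v
      simpa [Fintype.sum_bool] using this
    have c0t := hcons' 0 true; rw [f01] at c0t
    have c1t := hcons' 1 true; rw [f12] at c1t
    have c2t := hcons' 2 true; rw [f20] at c2t
    -- four Bell-type inequalities
    have E1 := h ![(-1),(-1),(-1)] (by intro i; fin_cases i <;> norm_num)
        (by rw [Fin.prod_univ_three]; norm_num; rfl)
    have E2 := h ![1,(-1),1] (by intro i; fin_cases i <;> norm_num)
        (by rw [Fin.prod_univ_three]; norm_num; rfl)
    have E3 := h ![1,1,(-1)] (by intro i; fin_cases i <;> norm_num)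
        (by rw [Fin.prod_univ_three]; norm_num; rfl)
    have E4 := h ![(-1),1,1] (by intro i; fin_cases i <;> norm_num)
        (by rw [Fin.prod_univ_three]; norm_num; rfl)
    rw [Fin.sum_univ_three, pairsum, pairsum, pairsum] at E1 E2 E3 E4
    norm_num [Matrix.cons_val_zero, Matrix.cons_val_one, Matrix.head_cons,
      Matrix.cons_val_two, Matrix.tail_cons] at E1 E2 E3 E4
    set r1 : ℝ := μ 0 (true,true) with hr1
    set r2 : ℝ := μ 1 (true,true) with hr2
    set r3 : ℝ := μ 2 (true,true) with hr3
    set p1 : ℝ := μ 0 (true,true) + μ 0 (true,false) with hp1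
    set p2 : ℝ := μ 1 (true,true) + μ 1 (true,false) with hp2
    set p3 : ℝ := μ 2 (true,true) + μ 2 (true,false) with hp3
    set t : ℝ := max (max 0 (r1+r3-p1)) (max (r1+r2-p2) (r2+r3-p3)) with ht
    have ht0 : (0:ℝ) ≤ t := le_trans (le_max_left 0 _) (le_max_left _ _)
    have htL1 : r1+r3-p1 ≤ t := le_trans (le_max_right 0 _) (le_max_left _ _)
    have htL2 : r1+r2-p2 ≤ t := le_trans (le_max_left _ _) (le_max_right _ _)
    have htL3 : r2+r3-p3 ≤ t := le_trans (le_max_right _ _) (le_max_right _ _)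
    -- trivial bounds
    have tr1 : r3 ≤ p1 := by linarith [hpos 2 (false,true), c2t]
    have tr2 : r2 ≤ p2 := by linarith [hpos 1 (true,false)]
    have tr2' : r1 ≤ p2 := by linarith [hpos 0 (false,true), c0t]
    have tr3 : r2 ≤ p3 := by linarith [hpos 1 (false,true), c1t]
    have tr3' : r3 ≤ p3 := by linarith [hpos 2 (true,false)]
    have tr1' : r1 ≤ p1 := by linarith [hpos 0 (true,false)]
    have tu1 : p2 + p3 - r2 ≤ 1 := by linarith [hpos 1 (false,false), hsum' 1, c1t]
    have tu2 : p1 + p3 - r3 ≤ 1 := by linarith [hpos 2 (false,false), hsum' 2, c2t]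
    have tu3 : p1 + p2 - r1 ≤ 1 := by linarith [hpos 0 (false,false), hsum' 0, c0t]
    have htU1 : t ≤ r1 := by
      apply max_le (max_le ?_ ?_) (max_le ?_ ?_) <;>
        linarith [hsum' 0, hsum' 1, hsum' 2, c0t, c1t, c2t, E4, hpos 0 (true,true), hpos 1 (true,true), hpos 2 (true,true), hpos 0 (true,false), hpos 1 (true,false), hpos 2 (true,false), hpos 0 (false,true), hpos 1 (false,true), hpos 2 (false,true), hpos 0 (false,false), hpos 1 (false,false), hpos 2 (false,false)]
    have htU2 : t ≤ r2 := by
      apply max_le (max_le ?_ ?_) (max_le ?_ ?_) <;>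
        linarith [hsum' 0, hsum' 1, hsum' 2, c0t, c1t, c2t, E2, hpos 0 (true,true), hpos 1 (true,true), hpos 2 (true,true), hpos 0 (true,false), hpos 1 (true,false), hpos 2 (true,false), hpos 0 (false,true), hpos 1 (false,true), hpos 2 (false,true), hpos 0 (false,false), hpos 1 (false,false), hpos 2 (false,false)]
    have htU3 : t ≤ r3 := by
      apply max_le (max_le ?_ ?_) (max_le ?_ ?_) <;>
        linarith [hsum' 0, hsum' 1, hsum' 2, c0t, c1t, c2t, E3, hpos 0 (true,true), hpos 1 (true,true), hpos 2 (true,true), hpos 0 (true,false), hpos 1 (true,false), hpos 2 (true,false), hpos 0 (false,true), hpos 1 (false,true), hpos 2 (false,true), hpos 0 (false,false), hpos 1 (false,false), hpos 2 (false,false)]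
    have htU0 : t ≤ 1 - p1 - p2 - p3 + r1 + r2 + r3 := by
      apply max_le (max_le ?_ ?_) (max_le ?_ ?_) <;>
        linarith [hsum' 0, hsum' 1, hsum' 2, c0t, c1t, c2t, E1, hpos 0 (true,true), hpos 1 (true,true), hpos 2 (true,true), hpos 0 (true,false), hpos 1 (true,false), hpos 2 (true,false), hpos 0 (false,true), hpos 1 (false,true), hpos 2 (false,true), hpos 0 (false,false), hpos 1 (false,false), hpos 2 (false,false)]
    refine ⟨fun x =>
      if x 0 then
        (if x 1 then (if x 2 then t else r1 - t)
         else (if x 2 then r3 - t else p1 - r1 - r3 + t))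
      else
        (if x 1 then (if x 2 then r2 - t else p2 - r1 - r2 + t)
         else (if x 2 then p3 - r2 - r3 + t else 1 - p1 - p2 - p3 + r1 + r2 + r3 - t)),
      ?_, ?_, ?_⟩
    · intro x
      cases hx0 : x 0 <;> cases hx1 : x 1 <;> cases hx2 : x 2 <;>
        simp only [hx0, hx1, hx2, if_true, if_false, Bool.false_eq_true, ite_true, ite_false] <;>
        linarith
    · rw [sum_pi3]
      norm_num [Matrix.cons_val_zero, Matrix.cons_val_one, Matrix.head_cons,
        Matrix.cons_val_two, Matrix.tail_cons]
      ring
    · intro i a b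
      fin_cases i <;> cases a <;> cases b <;>
        rw [Finset.sum_filter, sum_pi3] <;>
        simp (config := { decide := true }) only [show (⟨2, by omega⟩ : Fin 3) = 2 from rfl,
          Fin.mk_zero, Fin.mk_one] <;>
        norm_num <;>
        linarith [hsum' 0, hsum' 1, hsum' 2, c0t, c1t, c2t]
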